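/- arXiv:1904.08780 — 5 statements merged into one kernel-verified Lean document; each statement's English description precedes it below -/
import Mathlib

section
/- Let (Ω̄, 𝒢) be a measurable space, 𝒬 a nonempty convex set of probability measures on (Ω̄, 𝒢), and Y : Ω̄ → ℝ^d a 𝒢-measurable random variable. Then the one-period no-arbitrage condition NA(𝒬) holds if and only if 0 ∈ Ri(Conv(D)), where D is the quasi-sure support of Y. -/
open MeasureTheory Set
open scoped ENNReal

/-- The quasi-sure support of `Y` under the family of priors `𝒬`:
the intersection of all closed sets `A ⊆ ℝ^d` with `P(Y ∈ A) = 1` for every `P ∈ 𝒬`. -/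
def qsSupport {Ω : Type*} [MeasurableSpace Ω] {d : ℕ} (𝒬 : Set (Measure Ω))
    (Y : Ω → EuclideanSpace ℝ (Fin d)) : Set (EuclideanSpace ℝ (Fin d)) :=
  ⋂₀ {A : Set (EuclideanSpace ℝ (Fin d)) | IsClosed A ∧ ∀ P ∈ 𝒬, P (Y ⁻¹' A) = 1}

/-- One-period no-arbitrage condition `NA(𝒬)` :
`h·Y ≥ 0` 𝒬-q.s. implies `h·Y = 0` 𝒬-q.s. -/
def NAcond {Ω : Type*} [MeasurableSpace Ω] {d : ℕ} (𝒬 : Set (Measure Ω))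
    (Y : Ω → EuclideanSpace ℝ (Fin d)) : Prop :=
  ∀ h : EuclideanSpace ℝ (Fin d),
    (∀ P ∈ 𝒬, ∀ᵐ ω ∂P, 0 ≤ (inner ℝ h (Y ω) : ℝ)) →
    ∀ P ∈ 𝒬, ∀ᵐ ω ∂P, (inner ℝ h (Y ω) : ℝ) = 0

/-- Convexity of a set of measures. -/
def ConvexMeasSet {Ω : Type*} [MeasurableSpace Ω] (𝒬 : Set (Measure Ω)) : Prop :=
  ∀ P ∈ 𝒬, ∀ Q ∈ 𝒬, ∀ t : ℝ≥0∞, t ≤ 1 → t • P + (1 - t) • Q ∈ 𝒬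

/- ### Auxiliary topology: membership in the interior within a subtype -/

lemma aux_mem_interior_subtype {E : Type*} [MetricSpace E] {q : E → Prop} {s : Set E}
    {p : E} (hp : q p) :
    (⟨p, hp⟩ : Subtype q) ∈ interior (Subtype.val ⁻¹' s) ↔
      ∃ ε > 0, ∀ x, q x → dist x p < ε → x ∈ s := by
  rw [mem_interior_iff_mem_nhds, Metric.mem_nhds_iff]
  constructor
  · rintro ⟨ε, hε, h⟩
    exact ⟨ε, hε, fun x hx hd =>
      h (show (⟨x, hx⟩ : Subtype q) ∈ Metric.ball (⟨p, hp⟩ : Subtype q) ε from hd)⟩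
  · rintro ⟨ε, hε, h⟩
    exact ⟨ε, hε, fun x hx => h x.1 x.2 hx⟩

/-- Metric characterization of the intrinsic interior. -/
lemma mem_intrinsicInterior_iff_eps {E : Type*} [NormedAddCommGroup E] [NormedSpace ℝ E]
    {C : Set E} {p : E} :
    p ∈ intrinsicInterior ℝ C ↔
      p ∈ affineSpan ℝ C ∧
        ∃ ε > 0, ∀ x ∈ (affineSpan ℝ C : Set E), dist x p < ε → x ∈ C := by
  rw [mem_intrinsicInterior]
  constructor
  · rintro ⟨y, hy, rfl⟩
    refine ⟨y.2, ?_⟩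
    have : (⟨(y : E), y.2⟩ : Subtype (· ∈ affineSpan ℝ C)) ∈
        interior (Subtype.val ⁻¹' C) := by
      convert hy
    exact (aux_mem_interior_subtype y.2).mp this
  · rintro ⟨hp, ε, hε, h⟩
    refine ⟨⟨p, hp⟩, ?_, rfl⟩
    exact (aux_mem_interior_subtype hp).mpr ⟨ε, hε, h⟩

section Geometry

variable {E : Type*} [NormedAddCommGroup E] [InnerProductSpace ℝ E] [FiniteDimensional ℝ E]

/-- Membership in an affine span containing `0` is membership in its direction. -/
lemma mem_affineSpan_iff_mem_direction {C : Set E} (h0 : (0 : E) ∈ affineSpan ℝ C) (x : E) :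
    x ∈ affineSpan ℝ C ↔ x ∈ (affineSpan ℝ C).direction := by
  constructor
  · intro hx
    have := AffineSubspace.vsub_mem_direction hx h0
    simpa using this
  · intro hx
    have := AffineSubspace.vadd_mem_of_mem_direction hx h0
    simpa using this

/-- Key geometric lemma : the no-arbitrage dichotomy for a nonempty set `D` holds iff `0`
belongs to the relative interior of the convex hull of `D`. -/
lemma geom_key {D : Set E} (hD : D.Nonempty) :
    (∀ h : E, (∀ y ∈ D, 0 ≤ (inner ℝ h y : ℝ)) → ∀ y ∈ D, (inner ℝ h y : ℝ) = 0) ↔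
      (0 : E) ∈ intrinsicInterior ℝ (convexHull ℝ D) := by
  set C : Set E := convexHull ℝ D with hCdef
  have hCconv : Convex ℝ C := convex_convexHull ℝ D
  have hCne : C.Nonempty := convexHull_nonempty_iff.mpr hD
  have hDC : D ⊆ C := subset_convexHull ℝ D
  constructor
  · -- no-arbitrage → 0 ∈ ri C
    intro hNA
    by_cases hcl : (0 : E) ∈ closure C
    · -- 0 is in the affine span
      have hspan_closed : IsClosed ((affineSpan ℝ C : Set E)) :=
        (affineSpan ℝ C).closed_of_finiteDimensional
      have h0span : (0 : E) ∈ affineSpan ℝ C := by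
        have : closure C ⊆ (affineSpan ℝ C : Set E) :=
          closure_minimal (subset_affineSpan ℝ C) hspan_closed
        exact this hcl
      set V : Submodule ℝ E := (affineSpan ℝ C).direction with hVdef
      have memV : ∀ x : E, x ∈ V ↔ x ∈ affineSpan ℝ C := fun x =>
        (mem_affineSpan_iff_mem_direction h0span x).symm
      set C' : Set V := (Subtype.val : V → E) ⁻¹' C with hC'def
      have hC'conv : Convex ℝ C' := hCconv.linear_preimage V.subtype
      by_contra hri
      -- 0 ∉ interior C'
      have hint : (0 : V) ∉ interior C' := by
        intro h0int
        have h0' : ((0 : E) ∈ V) := V.zero_mem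
        have : (⟨(0 : E), h0'⟩ : Subtype (· ∈ V)) ∈ interior (Subtype.val ⁻¹' C) := h0int
        obtain ⟨ε, hε, hball⟩ := (aux_mem_interior_subtype h0').mp this
        exact hri (mem_intrinsicInterior_iff_eps.mpr
          ⟨h0span, ε, hε, fun x hx hd => hball x ((memV x).mpr hx) hd⟩)
      -- relative interior of C is nonempty; get an interior point of C'
      obtain ⟨z, hz⟩ := Set.Nonempty.intrinsicInterior hCconv hCne
      obtain ⟨hzspan, δ, hδ, hzball⟩ := mem_intrinsicInterior_iff_eps.mp hz
      have hzV : z ∈ V := (memV z).mpr hzspan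
      have hz'int : (⟨z, hzV⟩ : V) ∈ interior C' :=
        (aux_mem_interior_subtype hzV).mpr
          ⟨δ, hδ, fun x hx hd => hzball x ((memV x).mp hx) hd⟩
      -- separate 0 from the interior of C'
      obtain ⟨f, hf⟩ := geometric_hahn_banach_open_point (hC'conv.interior) isOpen_interior hint
      have hf0 : f 0 = 0 := map_zero f
      rw [hf0] at hf
      have hfz : f ⟨z, hzV⟩ < 0 := hf _ hz'int
      set c : ℝ := -f ⟨z, hzV⟩ with hcdef
      have hc : 0 < c := by simp [hcdef]; linarith
      -- f ≤ 0 on C'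
      have hfC' : ∀ a ∈ C', f a ≤ 0 := by
        intro a ha
        by_contra hfa
        push_neg at hfa
        set t : ℝ := c / (c + f a) with htdef
        have hden : 0 < c + f a := by linarith
        have ht0 : 0 ≤ t := le_of_lt (div_pos hc hden)
        have ht1 : 0 < 1 - t := by
          have : t < 1 := by
            rw [htdef, div_lt_one hden]; linarith
          linarith
        have hw : t • a + (1 - t) • (⟨z, hzV⟩ : V) ∈ interior C' :=
          hC'conv.combo_closure_interior_mem_interior (subset_closure ha) hz'int ht0 ht1
            (by ring)
        have hwf : f (t • a + (1 - t) • (⟨z, hzV⟩ : V)) < 0 := hf _ hw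
        have : f (t • a + (1 - t) • (⟨z, hzV⟩ : V)) = t * f a + (1 - t) * f ⟨z, hzV⟩ := by
          rw [map_add, _root_.map_smul, _root_.map_smul, smul_eq_mul, smul_eq_mul]
        rw [this] at hwf
        have hfz' : f ⟨z, hzV⟩ = -c := by simp [hcdef]
        rw [hfz'] at hwf
        rw [htdef] at hwf
        have : c / (c + f a) * f a + (1 - c / (c + f a)) * (-c) = 0 := by
          field_simp
          ring
        linarith
      -- produce the arbitrage vector h
      set h₀ : V := (InnerProductSpace.toDual ℝ V).symm (-f) with hh₀def
      have hinner : ∀ (v : V), (inner ℝ ((h₀ : E)) ((v : E)) : ℝ) = -f v := by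
        intro v
        have h1 : (inner ℝ h₀ v : ℝ) = (-f) v := InnerProductSpace.toDual_symm_apply
        rw [← Submodule.coe_inner V h₀ v, h1]
        simp
      have hpos : ∀ y ∈ D, 0 ≤ (inner ℝ ((h₀ : E)) y : ℝ) := by
        intro y hy
        have hyV : y ∈ V := (memV y).mpr (subset_affineSpan ℝ C (hDC hy))
        have : (inner ℝ ((h₀ : E)) y : ℝ) = -f ⟨y, hyV⟩ := hinner ⟨y, hyV⟩
        rw [this]
        have : f ⟨y, hyV⟩ ≤ 0 := hfC' _ (hDC hy)
        linarith
      have hzero : ∀ y ∈ D, (inner ℝ ((h₀ : E)) y : ℝ) = 0 := hNA _ hpos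
      -- inner h₀ vanishes on the convex hull C
      have hzeroC : ∀ y ∈ C, (inner ℝ ((h₀ : E)) y : ℝ) = 0 := by
        have : C ⊆ {y : E | (inner ℝ ((h₀ : E)) y : ℝ) = 0} := by
          apply convexHull_min hzero
          intro x hx y hy a b _ _ _
          have hx' : (inner ℝ ((h₀ : E)) x : ℝ) = 0 := hx
          have hy' : (inner ℝ ((h₀ : E)) y : ℝ) = 0 := hy
          show (inner ℝ ((h₀ : E)) (a • x + b • y) : ℝ) = 0
          rw [inner_add_right, real_inner_smul_right, real_inner_smul_right, hx', hy']
          ring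
        exact this
      -- contradiction with the interior point z
      have hzC : z ∈ C := intrinsicInterior_subset hz
      have h1 : (inner ℝ ((h₀ : E)) z : ℝ) = 0 := hzeroC z hzC
      have h2 : (inner ℝ ((h₀ : E)) z : ℝ) = c := by
        have := hinner ⟨z, hzV⟩
        simpa [hcdef] using this
      rw [h2] at h1
      exact absurd h1 (ne_of_gt hc)
    · -- 0 ∉ closure C : strict separation gives an immediate contradiction
      exfalso
      obtain ⟨f, u, hfu, hfC⟩ :=
        geometric_hahn_banach_point_closed (hCconv.closure) isClosed_closure hcl
      rw [map_zero] at hfu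
      set h : E := (InnerProductSpace.toDual ℝ E).symm f with hhdef
      have hinner : ∀ y : E, (inner ℝ h y : ℝ) = f y := fun y =>
        InnerProductSpace.toDual_symm_apply
      have hpos : ∀ y ∈ D, 0 ≤ (inner ℝ h y : ℝ) := by
        intro y hy
        rw [hinner]
        have := hfC y (subset_closure (hDC hy))
        linarith
      have hzero := hNA h hpos
      obtain ⟨y₀, hy₀⟩ := hD
      have h1 : (inner ℝ h y₀ : ℝ) = 0 := hzero y₀ hy₀
      rw [hinner] at h1
      have := hfC y₀ (subset_closure (hDC hy₀))
      linarith
  · -- 0 ∈ ri C → no-arbitrage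
    intro h0 h hpos y hyD
    obtain ⟨h0span, ε, hε, hball⟩ := mem_intrinsicInterior_iff_eps.mp h0
    have hposC : ∀ x ∈ C, 0 ≤ (inner ℝ h x : ℝ) := by
      have : C ⊆ {x : E | 0 ≤ (inner ℝ h x : ℝ)} := by
        apply convexHull_min hpos
        intro x hx y hy a b ha hb _
        have hx' : (0 : ℝ) ≤ inner ℝ h x := hx
        have hy' : (0 : ℝ) ≤ inner ℝ h y := hy
        show (0 : ℝ) ≤ inner ℝ h (a • x + b • y)
        rw [inner_add_right, real_inner_smul_right, real_inner_smul_right]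
        have := mul_nonneg ha hx'
        have := mul_nonneg hb hy'
        linarith
      exact this
    refine le_antisymm ?_ (hpos y hyD)
    -- find small t > 0 with -t • y ∈ C
    set t : ℝ := ε / (2 * (‖y‖ + 1)) with htdef
    have hy1 : (0 : ℝ) < ‖y‖ + 1 := by positivity
    have ht : 0 < t := by positivity
    have hyspan : y ∈ affineSpan ℝ C := subset_affineSpan ℝ C (hDC hyD)
    have hmem : (-t) • y ∈ affineSpan ℝ C := by
      have hyV := (mem_affineSpan_iff_mem_direction h0span y).mp hyspan
      exact (mem_affineSpan_iff_mem_direction h0span _).mpr (Submodule.smul_mem _ _ hyV)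
    have hdist : dist ((-t) • y) 0 < ε := by
      rw [dist_zero_right, norm_smul]
      have h1 : ‖(-t : ℝ)‖ = t := by
        rw [norm_neg, Real.norm_of_nonneg ht.le]
      rw [h1, htdef]
      have hlt : ‖y‖ < 2 * (‖y‖ + 1) := by linarith [norm_nonneg y]
      calc ε / (2 * (‖y‖ + 1)) * ‖y‖ < ε / (2 * (‖y‖ + 1)) * (2 * (‖y‖ + 1)) := by
            apply mul_lt_mul_of_pos_left _ (by positivity)
            linarith [norm_nonneg y]
          _ = ε := by field_simp
    have hmemC : (-t) • y ∈ C := hball _ hmem hdist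
    have := hposC _ hmemC
    rw [real_inner_smul_right] at this
    nlinarith

end Geometry

section MeasureLemmas

variable {Ω : Type*} [MeasurableSpace Ω] {d : ℕ}
  {𝒬 : Set (Measure Ω)} {Y : Ω → EuclideanSpace ℝ (Fin d)}

lemma qsSupport_isClosed (𝒬 : Set (Measure Ω)) (Y : Ω → EuclideanSpace ℝ (Fin d)) :
    IsClosed (qsSupport 𝒬 Y) :=
  isClosed_sInter fun _ hA => hA.1

lemma measure_qsSupport (h𝒬prob : ∀ P ∈ 𝒬, IsProbabilityMeasure P) (hY : Measurable Y) :
    ∀ P ∈ 𝒬, P (Y ⁻¹' qsSupport 𝒬 Y) = 1 := by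
  intro P hP
  haveI := h𝒬prob P hP
  set S : Set (Set (EuclideanSpace ℝ (Fin d))) :=
    {A | IsClosed A ∧ ∀ P ∈ 𝒬, P (Y ⁻¹' A) = 1} with hSdef
  rw [← prob_compl_eq_zero_iff (hY (qsSupport_isClosed 𝒬 Y).measurableSet)]
  obtain ⟨T, hTc, hTsub, hTun⟩ :=
    TopologicalSpace.isOpen_sUnion_countable (compl '' S)
      (by rintro _ ⟨A, hA, rfl⟩; exact hA.1.isOpen_compl)
  have hDc : (qsSupport 𝒬 Y)ᶜ = ⋃₀ T := by
    rw [qsSupport, compl_sInter, hTun]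
  rw [← preimage_compl, hDc, preimage_sUnion]
  rw [measure_biUnion_null_iff hTc]
  intro u hu
  obtain ⟨A, hA, rfl⟩ := hTsub hu
  rw [preimage_compl]
  exact (prob_compl_eq_zero_iff (hY hA.1.measurableSet)).mpr (hA.2 P hP)

lemma qsSupport_nonempty (h𝒬ne : 𝒬.Nonempty) (h𝒬prob : ∀ P ∈ 𝒬, IsProbabilityMeasure P)
    (hY : Measurable Y) : (qsSupport 𝒬 Y).Nonempty := by
  by_contra h
  rw [not_nonempty_iff_eq_empty] at h
  obtain ⟨P, hP⟩ := h𝒬ne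
  have := measure_qsSupport h𝒬prob hY P hP
  rw [h] at this
  simp at this

/-- Characterization of quasi-sure membership in a closed set via the quasi-sure support. -/
lemma ae_mem_iff_qsSupport_subset (h𝒬prob : ∀ P ∈ 𝒬, IsProbabilityMeasure P)
    (hY : Measurable Y) {A : Set (EuclideanSpace ℝ (Fin d))} (hA : IsClosed A) :
    (∀ P ∈ 𝒬, ∀ᵐ ω ∂P, Y ω ∈ A) ↔ qsSupport 𝒬 Y ⊆ A := by
  constructor
  · intro h
    apply sInter_subset_of_mem
    refine ⟨hA, fun P hP => ?_⟩
    haveI := h𝒬prob P hP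
    rw [← prob_compl_eq_zero_iff (hY hA.measurableSet)]
    have := h P hP
    rw [ae_iff] at this
    convert this using 2
    rfl
  · intro hsub P hP
    haveI := h𝒬prob P hP
    have h1 : P (Y ⁻¹' qsSupport 𝒬 Y) = 1 := measure_qsSupport h𝒬prob hY P hP
    have h0 : P (Y ⁻¹' qsSupport 𝒬 Y)ᶜ = 0 :=
      (prob_compl_eq_zero_iff (hY (qsSupport_isClosed 𝒬 Y).measurableSet)).mpr h1
    have hae : ∀ᵐ ω ∂P, Y ω ∈ qsSupport 𝒬 Y := by
      rw [ae_iff]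
      convert h0 using 2
      rfl
    filter_upwards [hae] with ω hω using hsub hω

end MeasureLemmas

/-- NA(𝒬) holds iff `0` lies in the relative interior of the convex hull
of the quasi-sure support `D`. -/
theorem na_iff_zero_mem_ri_conv_qsSupport
    {Ω : Type*} [MeasurableSpace Ω] {d : ℕ}
    (𝒬 : Set (Measure Ω)) (h𝒬ne : 𝒬.Nonempty)
    (h𝒬prob : ∀ P ∈ 𝒬, IsProbabilityMeasure P)
    (h𝒬conv : ConvexMeasSet 𝒬)
    (Y : Ω → EuclideanSpace ℝ (Fin d)) (hY : Measurable Y) :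
    NAcond 𝒬 Y ↔
      (0 : EuclideanSpace ℝ (Fin d)) ∈
        intrinsicInterior ℝ (convexHull ℝ (qsSupport 𝒬 Y)) := by
  have hDne : (qsSupport 𝒬 Y).Nonempty := qsSupport_nonempty h𝒬ne h𝒬prob hY
  have hclosed_ge : ∀ h : EuclideanSpace ℝ (Fin d),
      IsClosed {y : EuclideanSpace ℝ (Fin d) | 0 ≤ (inner ℝ h y : ℝ)} := fun h =>
    isClosed_le continuous_const (Continuous.inner continuous_const continuous_id)
  have hclosed_eq : ∀ h : EuclideanSpace ℝ (Fin d),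
      IsClosed {y : EuclideanSpace ℝ (Fin d) | (inner ℝ h y : ℝ) = 0} := fun h =>
    isClosed_eq (Continuous.inner continuous_const continuous_id) continuous_const
  have key : NAcond 𝒬 Y ↔
      (∀ h : EuclideanSpace ℝ (Fin d),
        (∀ y ∈ qsSupport 𝒬 Y, 0 ≤ (inner ℝ h y : ℝ)) →
        ∀ y ∈ qsSupport 𝒬 Y, (inner ℝ h y : ℝ) = 0) := by
    unfold NAcond
    constructor
    · intro hNA h hpos
      have h1 : ∀ P ∈ 𝒬, ∀ᵐ ω ∂P, Y ω ∈ {y : EuclideanSpace ℝ (Fin d) | 0 ≤ (inner ℝ h y : ℝ)} :=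
        (ae_mem_iff_qsSupport_subset h𝒬prob hY (hclosed_ge h)).mpr hpos
      have h2 := hNA h h1
      exact (ae_mem_iff_qsSupport_subset h𝒬prob hY (hclosed_eq h)).mp h2
    · intro hgeo h hpos
      have h1 : qsSupport 𝒬 Y ⊆ {y : EuclideanSpace ℝ (Fin d) | 0 ≤ (inner ℝ h y : ℝ)} :=
        (ae_mem_iff_qsSupport_subset h𝒬prob hY (hclosed_ge h)).mp hpos
      have h2 := hgeo h h1
      exact (ae_mem_iff_qsSupport_subset h𝒬prob hY (hclosed_eq h)).mpr h2
  rw [key]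
  exact geom_key hDne
end

section
/- Let (Ω̄, 𝒢) be a measurable space, 𝒬 a nonempty convex set of probability measures on (Ω̄, 𝒢), and Y : Ω̄ → ℝ^d a 𝒢-measurable random variable. Suppose 0 ∈ Ri(Conv(D)) and let ε > 0 be such that B(0,ε) ∩ Aff(D) ⊆ Conv(D). Then there exists κ ∈ (0,1] such that for every h ∈ Aff(D) with h ≠ 0 there exists P_h ∈ 𝒬 satisfying P_h(h·Y < −(ε/2)|h|) ≥ κ; that is, the quantitative no-arbitrage condition holds with β = ε/2. -/
open MeasureTheory Set
open scoped ENNReal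

/-- If an open set meets the quasi-sure support, some prior charges it. -/
lemma exists_prior_pos_of_open_inter_qsSupport
    {Ω : Type*} [MeasurableSpace Ω] {d : ℕ}
    (𝒬 : Set (Measure Ω))
    (h𝒬prob : ∀ P ∈ 𝒬, IsProbabilityMeasure P)
    (Y : Ω → EuclideanSpace ℝ (Fin d)) (hY : Measurable Y)
    {U : Set (EuclideanSpace ℝ (Fin d))} (hU : IsOpen U)
    {y : EuclideanSpace ℝ (Fin d)} (hyD : y ∈ qsSupport 𝒬 Y) (hyU : y ∈ U) :
    ∃ P ∈ 𝒬, 0 < P (Y ⁻¹' U) := by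
  by_contra hcon
  push_neg at hcon
  have hzero : ∀ P ∈ 𝒬, P (Y ⁻¹' U) = 0 := fun P hP => le_antisymm (hcon P hP) zero_le
  have hmem : Uᶜ ∈ {A : Set (EuclideanSpace ℝ (Fin d)) |
      IsClosed A ∧ ∀ P ∈ 𝒬, P (Y ⁻¹' A) = 1} := by
    refine ⟨hU.isClosed_compl, fun P hP => ?_⟩
    haveI := h𝒬prob P hP
    rw [Set.preimage_compl]
    rw [prob_compl_eq_one_iff (hY hU.measurableSet)]
    exact hzero P hP
  have : y ∈ Uᶜ := (Set.sInter_subset_of_mem hmem) hyD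
  exact this hyU

/-- If `0 ∈ Ri(Conv(D))` and `B(0,ε) ∩ Aff(D) ⊆ Conv(D)`, then the quantitative
no-arbitrage condition holds with `β = ε/2`. -/
theorem quantitative_with_beta_eq_eps_div_two
    {Ω : Type*} [MeasurableSpace Ω] {d : ℕ}
    (𝒬 : Set (Measure Ω)) (h𝒬ne : 𝒬.Nonempty)
    (h𝒬prob : ∀ P ∈ 𝒬, IsProbabilityMeasure P)
    (h𝒬conv : ConvexMeasSet 𝒬)
    (Y : Ω → EuclideanSpace ℝ (Fin d)) (hY : Measurable Y)
    (h0 : (0 : EuclideanSpace ℝ (Fin d)) ∈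
      intrinsicInterior ℝ (convexHull ℝ (qsSupport 𝒬 Y)))
    (ε : ℝ) (hε : 0 < ε)
    (hball : Metric.ball (0 : EuclideanSpace ℝ (Fin d)) ε ∩
        (affineSpan ℝ (qsSupport 𝒬 Y) : Set (EuclideanSpace ℝ (Fin d)))
        ⊆ convexHull ℝ (qsSupport 𝒬 Y)) :
    ∃ κ : ℝ, 0 < κ ∧ κ ≤ 1 ∧
      ∀ h : EuclideanSpace ℝ (Fin d),
        h ∈ affineSpan ℝ (qsSupport 𝒬 Y) → h ≠ 0 →
        ∃ P ∈ 𝒬, ENNReal.ofReal κ ≤ P {ω | (inner ℝ h (Y ω) : ℝ) < -(ε / 2) * ‖h‖} := by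
  classical
  set D := qsSupport 𝒬 Y with hD
  -- 0 belongs to the affine span
  have h0conv : (0 : EuclideanSpace ℝ (Fin d)) ∈ convexHull ℝ D := intrinsicInterior_subset h0
  have h0span : (0 : EuclideanSpace ℝ (Fin d)) ∈ affineSpan ℝ D := convexHull_subset_affineSpan (𝕜 := ℝ) D h0conv
  -- the affine span is closed under scalar multiplication
  have hsmul : ∀ (r : ℝ) (h : EuclideanSpace ℝ (Fin d)), h ∈ affineSpan ℝ D → r • h ∈ affineSpan ℝ D := by
    intro r h hh
    have hdir : h ∈ (affineSpan ℝ D).direction := by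
      have := AffineSubspace.vsub_mem_direction hh h0span
      simpa using this
    have : r • h ∈ (affineSpan ℝ D).direction := Submodule.smul_mem _ r hdir
    have := AffineSubspace.vadd_mem_of_mem_direction this h0span
    simpa using this
  -- the relevant unit sphere
  set S : Set (EuclideanSpace ℝ (Fin d)) := Metric.sphere (0 : EuclideanSpace ℝ (Fin d)) 1 ∩ (affineSpan ℝ D : Set (EuclideanSpace ℝ (Fin d))) with hS
  have hSclosed : IsClosed (affineSpan ℝ D : Set (EuclideanSpace ℝ (Fin d))) :=
    AffineSubspace.closed_of_finiteDimensional _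
  have hScompact : IsCompact S :=
    (isCompact_sphere (0 : EuclideanSpace ℝ (Fin d)) 1).inter_right hSclosed
  -- key pointwise estimate on the unit sphere
  have hkey : ∀ h ∈ S, ∃ δ : ℝ, 0 < δ ∧ ∃ P ∈ 𝒬, ∃ c : ℝ, 0 < c ∧ c ≤ 1 ∧
      ∀ h' : EuclideanSpace ℝ (Fin d), h' ∈ Metric.ball h δ →
        ENNReal.ofReal c ≤ P {ω | (inner ℝ h' (Y ω) : ℝ) < -(ε / 2)} := by
    rintro h ⟨hhsph, hhspan⟩
    have hnorm : ‖h‖ = 1 := by simpa using hhsph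
    -- the point -(3ε/4) • h lies in the convex hull of D
    have hx0 : (-(3 * ε / 4) • h) ∈ convexHull ℝ D := by
      apply hball
      constructor
      · simp only [Metric.mem_ball, dist_zero_right, norm_smul, hnorm, mul_one,
          Real.norm_eq_abs]
        rw [abs_of_nonpos (by linarith)]
        linarith
      · exact hsmul _ _ hhspan
    -- there exists y ∈ D with ⟪h, y⟫ < -5ε/8
    have hinner_x0 : (inner ℝ h (-(3 * ε / 4) • h) : ℝ) = -(3 * ε / 4) := by
      rw [real_inner_smul_right, real_inner_self_eq_norm_sq, hnorm]
      ring
    have hyex : ∃ y ∈ D, (inner ℝ h y : ℝ) < -(5 * ε / 8) := by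
      by_contra hcon
      push_neg at hcon
      have hsub : D ⊆ {x : EuclideanSpace ℝ (Fin d) | -(5 * ε / 8) ≤ (inner ℝ h x : ℝ)} := fun x hx => hcon x hx
      have hconv : Convex ℝ {x : EuclideanSpace ℝ (Fin d) | -(5 * ε / 8) ≤ (inner ℝ h x : ℝ)} :=
        convex_halfSpace_ge ⟨fun x y => inner_add_right _ _ _,
          fun c x => real_inner_smul_right _ _ _⟩ _
      have := convexHull_min hsub hconv hx0
      rw [Set.mem_setOf_eq, hinner_x0] at this
      linarith
    obtain ⟨y, hyD, hy⟩ := hyex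
    -- the open set U
    set U : Set (EuclideanSpace ℝ (Fin d)) := {x : EuclideanSpace ℝ (Fin d) | (inner ℝ h x : ℝ) < -(5 * ε / 8)} with hU
    have hUopen : IsOpen U :=
      isOpen_lt (Continuous.inner continuous_const continuous_id) continuous_const
    obtain ⟨P, hP𝒬, hPpos⟩ :=
      exists_prior_pos_of_open_inter_qsSupport 𝒬 h𝒬prob Y hY hUopen hyD hy
    haveI := h𝒬prob P hP𝒬
    -- truncation
    set s : ℕ → Set Ω := fun n => Y ⁻¹' (U ∩ Metric.closedBall (0 : EuclideanSpace ℝ (Fin d)) n) with hs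
    have hsmono : Monotone s := by
      intro m n hmn
      apply Set.preimage_mono
      exact Set.inter_subset_inter_right _ (Metric.closedBall_subset_closedBall
        (by exact_mod_cast hmn))
    have hsunion : (⋃ n, s n) = Y ⁻¹' U := by
      ext ω
      simp only [hs, Set.mem_iUnion, Set.mem_preimage, Set.mem_inter_iff,
        Metric.mem_closedBall, dist_zero_right]
      constructor
      · rintro ⟨n, hU, _⟩; exact hU
      · intro hU
        obtain ⟨n, hn⟩ := exists_nat_ge ‖Y ω‖
        exact ⟨n, hU, hn⟩
    have hiSup : P (Y ⁻¹' U) = ⨆ n, P (s n) := by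
      rw [← hsunion]
      exact (hsmono.directed_le).measure_iUnion
    have hPne : P (Y ⁻¹' U) ≠ 0 := hPpos.ne'
    have hPfin : P (Y ⁻¹' U) ≠ ⊤ := (measure_lt_top P _).ne
    have hhalf : P (Y ⁻¹' U) / 2 < P (Y ⁻¹' U) := ENNReal.half_lt_self hPne hPfin
    rw [hiSup] at hhalf
    obtain ⟨n, hn⟩ := lt_iSup_iff.mp hhalf
    -- the constant c
    set c : ℝ := (P (s n)).toReal with hc
    have hsnfin : P (s n) ≠ ⊤ := (measure_lt_top P _).ne
    have hsnpos : 0 < P (s n) := lt_of_le_of_lt zero_le hn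
    have hc0 : 0 < c := ENNReal.toReal_pos hsnpos.ne' hsnfin
    have hc1 : c ≤ 1 := by
      have : P (s n) ≤ 1 := prob_le_one
      calc c ≤ (1 : ℝ≥0∞).toReal := ENNReal.toReal_mono (by simp) this
        _ = 1 := by simp
    refine ⟨ε / (8 * (n + 1)), by positivity, P, hP𝒬, c, hc0, hc1, ?_⟩
    intro h' hh'
    have hsub : s n ⊆ {ω | (inner ℝ h' (Y ω) : ℝ) < -(ε / 2)} := by
      intro ω hω
      simp only [hs, Set.mem_preimage, Set.mem_inter_iff, hU, Set.mem_setOf_eq,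
        Metric.mem_closedBall, dist_zero_right] at hω
      obtain ⟨h1, h2⟩ := hω
      have hdist : ‖h' - h‖ < ε / (8 * (n + 1)) := by
        simpa [dist_eq_norm] using hh'
      have key : (inner ℝ h' (Y ω) : ℝ) =
          (inner ℝ h (Y ω) : ℝ) + (inner ℝ (h' - h) (Y ω) : ℝ) := by
        have he : h + (h' - h) = h' := by abel
        rw [← inner_add_left, he]
      have hcs : (inner ℝ (h' - h) (Y ω) : ℝ) ≤ ‖h' - h‖ * ‖Y ω‖ :=
        real_inner_le_norm _ _
      have hbound : ‖h' - h‖ * ‖Y ω‖ ≤ ε / (8 * (n + 1)) * n := by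
        apply mul_le_mul hdist.le h2 (norm_nonneg _) (by positivity)
      have hsmall : ε / (8 * (n + 1)) * n < ε / 8 := by
        rw [div_mul_eq_mul_div, div_lt_div_iff₀ (by positivity) (by norm_num)]
        have : (n : ℝ) < n + 1 := by linarith
        nlinarith
      simp only [Set.mem_setOf_eq]
      rw [key]
      linarith
    calc ENNReal.ofReal c = P (s n) := ENNReal.ofReal_toReal hsnfin
      _ ≤ P {ω | (inner ℝ h' (Y ω) : ℝ) < -(ε / 2)} := measure_mono hsub
  -- choose the data
  choose! δ hδ P hP c hc0 hc1 hineq using hkey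
  -- finite subcover
  have hcover : S ⊆ ⋃ h ∈ S, Metric.ball h (δ h) := by
    intro h hh
    exact Set.mem_biUnion hh (Metric.mem_ball_self (hδ h hh))
  obtain ⟨t, htS, htfin, htcover⟩ :=
    hScompact.elim_finite_subcover_image (fun h _ => Metric.isOpen_ball) hcover
  set tF := htfin.toFinset with htF
  -- define κ
  set κ : ℝ := if hne : tF.Nonempty then min 1 (tF.inf' hne c) else 1 with hκ
  have hκpos : 0 < κ := by
    rw [hκ]
    split_ifs with hne
    · apply lt_min one_pos
      obtain ⟨h₀, hh₀, hle⟩ := Finset.exists_mem_eq_inf' hne c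
      rw [hle]
      exact hc0 h₀ (htS (htfin.mem_toFinset.mp hh₀))
    · exact one_pos
  have hκ1 : κ ≤ 1 := by
    rw [hκ]; split_ifs with hne
    · exact min_le_left _ _
    · exact le_rfl
  refine ⟨κ, hκpos, hκ1, ?_⟩
  intro h hhspan hh0
  -- normalize
  set u : EuclideanSpace ℝ (Fin d) := ‖h‖⁻¹ • h with hu
  have hnorm_pos : (0 : ℝ) < ‖h‖ := norm_pos_iff.mpr hh0
  have hunorm : ‖u‖ = 1 := by
    rw [hu, norm_smul, norm_inv, norm_norm, inv_mul_cancel₀ hnorm_pos.ne']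
  have huS : u ∈ S := ⟨by simpa using hunorm, hsmul _ _ hhspan⟩
  obtain ⟨h₀, hh₀t, hball₀⟩ := Set.mem_iUnion₂.mp (htcover huS)
  have hh₀tF : h₀ ∈ tF := htfin.mem_toFinset.mpr hh₀t
  have hh₀S : h₀ ∈ S := htS hh₀t
  have htne : tF.Nonempty := ⟨h₀, hh₀tF⟩
  have hκle : κ ≤ c h₀ := by
    rw [hκ, dif_pos htne]
    exact le_trans (min_le_right _ _) (Finset.inf'_le c hh₀tF)
  refine ⟨P h₀, hP h₀ hh₀S, ?_⟩
  have hPineq := hineq h₀ hh₀S u hball₀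
  have hseteq : {ω | (inner ℝ u (Y ω) : ℝ) < -(ε / 2)} =
      {ω | (inner ℝ h (Y ω) : ℝ) < -(ε / 2) * ‖h‖} := by
    ext ω
    simp only [Set.mem_setOf_eq, hu, real_inner_smul_left]
    rw [inv_mul_lt_iff₀ hnorm_pos]
    constructor <;> intro <;> linarith [mul_comm (‖h‖) (-(ε/2))]
  rw [hseteq] at hPineq
  exact le_trans (ENNReal.ofReal_le_ofReal hκle) hPineq
end

section
/- Let (Ω̄, 𝒢) be a measurable space, 𝒬 a nonempty convex set of probability measures on (Ω̄, 𝒢), and Y : Ω̄ → ℝ^d a 𝒢-measurable random variable. Assume the one-period no-arbitrage condition NA(𝒬) holds. Then for every h ∈ Aff(D) such that h·Y ≥ 0 𝒬-q.s., one has h = 0. -/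
open MeasureTheory Set
open scoped ENNReal

/-- Under NA(𝒬), any `h ∈ Aff(D)` with `h·Y ≥ 0` 𝒬-q.s. must vanish. -/
theorem eq_zero_of_mem_affineSpan_of_nonneg
    {Ω : Type*} [MeasurableSpace Ω] {d : ℕ}
    (𝒬 : Set (Measure Ω)) (h𝒬ne : 𝒬.Nonempty)
    (h𝒬prob : ∀ P ∈ 𝒬, IsProbabilityMeasure P)
    (h𝒬conv : ConvexMeasSet 𝒬)
    (Y : Ω → EuclideanSpace ℝ (Fin d)) (hY : Measurable Y)
    (hNA : NAcond 𝒬 Y) :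
    ∀ h : EuclideanSpace ℝ (Fin d),
      h ∈ affineSpan ℝ (qsSupport 𝒬 Y) →
      (∀ P ∈ 𝒬, ∀ᵐ ω ∂P, 0 ≤ (inner ℝ h (Y ω) : ℝ)) →
      h = 0 := by
  intro h hmem hpos
  have hzero := hNA h hpos
  set K : Submodule ℝ (EuclideanSpace ℝ (Fin d)) :=
    LinearMap.ker ((innerSL ℝ h).toLinearMap) with hK
  have hKset : (K : Set (EuclideanSpace ℝ (Fin d)))
      = {x | (inner ℝ h x : ℝ) = 0} := rfl
  have hKclosed : IsClosed (K : Set (EuclideanSpace ℝ (Fin d))) := by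
    rw [hKset]
    exact isClosed_eq (innerSL ℝ h).continuous continuous_const
  have hDsub : qsSupport 𝒬 Y ⊆ (K : Set (EuclideanSpace ℝ (Fin d))) := by
    apply sInter_subset_of_mem
    refine ⟨hKclosed, fun P hP => ?_⟩
    haveI := h𝒬prob P hP
    have hmeas : MeasurableSet (Y ⁻¹' (K : Set (EuclideanSpace ℝ (Fin d)))) :=
      hY hKclosed.measurableSet
    rw [← prob_compl_eq_zero_iff hmeas]
    have := hzero P hP
    rw [ae_iff] at this
    convert this using 2
    rfl
  have hle : affineSpan ℝ (qsSupport 𝒬 Y) ≤ K.toAffineSubspace := by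
    rw [← AffineSubspace.affineSpan_coe K.toAffineSubspace]
    exact affineSpan_mono ℝ hDsub
  have hhK : h ∈ K := hle hmem
  have : (inner ℝ h h : ℝ) = 0 := hhK
  exact inner_self_eq_zero.mp this
end

section
/- Let (Ω̄, 𝒢) be a measurable space, 𝒬 a nonempty set of probability measures on (Ω̄, 𝒢), and Y : Ω̄ → ℝ^d a 𝒢-measurable random variable. Then for h ∈ ℝ^d, h·Y = 0 𝒬-q.s. if and only if h·y = 0 for every y ∈ D; in other words, {h ∈ ℝ^d : h·Y = 0 𝒬-q.s.} is the orthogonal complement D^⊥ of the quasi-sure support D. -/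
open MeasureTheory Set

lemma qsSupport_full {Ω : Type*} [MeasurableSpace Ω] {d : ℕ}
    (𝒬 : Set (Measure Ω)) (h𝒬prob : ∀ P ∈ 𝒬, IsProbabilityMeasure P)
    (Y : Ω → EuclideanSpace ℝ (Fin d)) (hY : Measurable Y)
    {P : Measure Ω} (hP : P ∈ 𝒬) :
    ∀ᵐ ω ∂P, Y ω ∈ qsSupport 𝒬 Y := by
  haveI := h𝒬prob P hP
  set μ : Measure (EuclideanSpace ℝ (Fin d)) := P.map Y with hμ
  haveI : IsProbabilityMeasure μ := Measure.isProbabilityMeasure_map hY.aemeasurable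
  set 𝒜 := {A : Set (EuclideanSpace ℝ (Fin d)) | IsClosed A ∧ ∀ P ∈ 𝒬, P (Y ⁻¹' A) = 1}
  have hopen : ∀ s ∈ compl '' 𝒜, IsOpen s := by
    rintro s ⟨A, hA, rfl⟩
    exact hA.1.isOpen_compl
  obtain ⟨T, hTc, hT𝒜, hTeq⟩ := TopologicalSpace.isOpen_sUnion_countable _ hopen
  have hnull : ∀ s ∈ T, μ s = 0 := by
    intro s hs
    obtain ⟨A, hA, rfl⟩ := hT𝒜 hs
    have hAm : MeasurableSet A := hA.1.measurableSet
    rw [hμ, Measure.map_apply hY hAm.compl, Set.preimage_compl,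
      prob_compl_eq_zero_iff (hY hAm)]
    exact hA.2 P hP
  have hcomp : μ (qsSupport 𝒬 Y)ᶜ = 0 := by
    have : (qsSupport 𝒬 Y)ᶜ = ⋃₀ (compl '' 𝒜) := by
      simp [qsSupport, Set.compl_sInter, Set.sUnion_image]
      rfl
    rw [this, ← hTeq]
    exact (measure_sUnion_null_iff hTc).2 hnull
  have : P (Y ⁻¹' (qsSupport 𝒬 Y)ᶜ) = 0 := by
    have hm : MeasurableSet (qsSupport 𝒬 Y)ᶜ := by
      refine IsOpen.measurableSet ?_
      refine isOpen_compl_iff.2 ?_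
      exact isClosed_sInter fun A hA => hA.1
    rw [← Measure.map_apply hY hm]
    exact hcomp
  filter_upwards [measure_eq_zero_iff_ae_notMem.mp this] with ω hω
  simpa using hω

/-- `h·Y = 0` 𝒬-q.s. iff `h` is orthogonal to the quasi-sure support `D`;
i.e. `{h | h·Y = 0 𝒬-q.s.} = D^⊥`. -/
theorem qs_zero_iff_mem_orthogonal
    {Ω : Type*} [MeasurableSpace Ω] {d : ℕ}
    (𝒬 : Set (Measure Ω)) (h𝒬ne : 𝒬.Nonempty)
    (h𝒬prob : ∀ P ∈ 𝒬, IsProbabilityMeasure P)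
    (Y : Ω → EuclideanSpace ℝ (Fin d)) (hY : Measurable Y) :
    {h : EuclideanSpace ℝ (Fin d) | ∀ P ∈ 𝒬, ∀ᵐ ω ∂P, (inner ℝ h (Y ω) : ℝ) = 0} =
      {h : EuclideanSpace ℝ (Fin d) | ∀ y ∈ qsSupport 𝒬 Y, (inner ℝ h y : ℝ) = 0} := by
  ext h
  simp only [Set.mem_setOf_eq]
  constructor
  · intro hqs y hy
    set A : Set (EuclideanSpace ℝ (Fin d)) := {y | (inner ℝ h y : ℝ) = 0}
    have hAcl : IsClosed A :=
      isClosed_eq (Continuous.inner continuous_const continuous_id) continuous_const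
    have : A ∈ {A : Set (EuclideanSpace ℝ (Fin d)) |
        IsClosed A ∧ ∀ P ∈ 𝒬, P (Y ⁻¹' A) = 1} := by
      refine ⟨hAcl, fun P hP => ?_⟩
      haveI := h𝒬prob P hP
      have hm : MeasurableSet (Y ⁻¹' A) := hY hAcl.measurableSet
      rw [← prob_compl_eq_zero_iff hm]
      have := hqs P hP
      rw [ae_iff] at this
      exact this
    exact hy A this
  · intro horth P hP
    filter_upwards [qsSupport_full 𝒬 h𝒬prob Y hY hP] with ω hω
    exact horth _ hω
end

section
/- Let (Ω̄, 𝒢) be a measurable space, 𝒬 a nonempty set of probability measures on (Ω̄, 𝒢), and Y : Ω̄ → ℝ^d a 𝒢-measurable random variable. Suppose that for every integer n ≥ 1 there exists h_n ∈ Aff(D) with |h_n| = 1 such that P(h_n·Y < −1/n) < 1/n for every P ∈ 𝒬. Then there exists h* ∈ Aff(D) with |h*| = 1 such that h*·Y ≥ 0 P-almost surely for every P ∈ 𝒬. -/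
open MeasureTheory Set
open scoped ENNReal

/-- If for every `n ≥ 1` there is a unit vector `h_n ∈ Aff(D)` with
`P(h_n·Y < -1/n) < 1/n` for all `P ∈ 𝒬`, then there is a unit vector
`h* ∈ Aff(D)` with `h*·Y ≥ 0` `P`-a.s. for all `P ∈ 𝒬`. -/
theorem exists_unit_vector_nonneg_qs
    {Ω : Type*} [MeasurableSpace Ω] {d : ℕ}
    (𝒬 : Set (Measure Ω)) (h𝒬ne : 𝒬.Nonempty)
    (h𝒬prob : ∀ P ∈ 𝒬, IsProbabilityMeasure P)
    (Y : Ω → EuclideanSpace ℝ (Fin d)) (hY : Measurable Y)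
    (hseq : ∀ n : ℕ, 1 ≤ n →
      ∃ h : EuclideanSpace ℝ (Fin d),
        h ∈ affineSpan ℝ (qsSupport 𝒬 Y) ∧ ‖h‖ = 1 ∧
        ∀ P ∈ 𝒬, P {ω | (inner ℝ h (Y ω) : ℝ) < -(1 / n)} < ENNReal.ofReal (1 / n)) :
    ∃ hstar : EuclideanSpace ℝ (Fin d),
      hstar ∈ affineSpan ℝ (qsSupport 𝒬 Y) ∧ ‖hstar‖ = 1 ∧
      ∀ P ∈ 𝒬, ∀ᵐ ω ∂P, 0 ≤ (inner ℝ hstar (Y ω) : ℝ) := by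
  classical
  set D := qsSupport 𝒬 Y with hD
  -- choose the sequence
  have hg : ∀ n : ℕ, ∃ h : EuclideanSpace ℝ (Fin d),
      h ∈ affineSpan ℝ D ∧ ‖h‖ = 1 ∧
      ∀ P ∈ 𝒬, P {ω | (inner ℝ h (Y ω) : ℝ) < -(1 / ((n+1 : ℕ) : ℝ))}
        < ENNReal.ofReal (1 / ((n+1 : ℕ) : ℝ)) :=
    fun n => hseq (n+1) (Nat.le_add_left 1 n)
  choose g hg_mem hg_norm hg_bd using hg
  -- compactness
  have hclosed : IsClosed ((affineSpan ℝ D : Set (EuclideanSpace ℝ (Fin d)))) :=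
    AffineSubspace.closed_of_finiteDimensional _
  have hK : IsCompact ((affineSpan ℝ D : Set (EuclideanSpace ℝ (Fin d))) ∩ Metric.sphere (0:EuclideanSpace ℝ (Fin d)) 1) :=
    (isCompact_sphere (0:EuclideanSpace ℝ (Fin d)) 1).inter_left hclosed
  have hmem : ∀ n, g n ∈ (affineSpan ℝ D : Set (EuclideanSpace ℝ (Fin d))) ∩ Metric.sphere (0:EuclideanSpace ℝ (Fin d)) 1 := by
    intro n
    exact ⟨hg_mem n, by simpa [mem_sphere_zero_iff_norm] using hg_norm n⟩
  obtain ⟨hstar, hstarK, φ, hφ, htend⟩ := hK.tendsto_subseq hmem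
  refine ⟨hstar, hstarK.1, by simpa [mem_sphere_zero_iff_norm] using hstarK.2, ?_⟩
  intro P hP
  -- norm convergence
  have hnorm0 : Filter.Tendsto (fun k => ‖g (φ k) - hstar‖) Filter.atTop (nhds 0) := by
    have := (htend.sub (tendsto_const_nhds (x := hstar))).norm
    simpa using this
  -- the truncated bad sets
  set A : ℕ → Set Ω := fun m =>
    {ω | (inner ℝ hstar (Y ω) : ℝ) < -(1 / ((m+1 : ℕ) : ℝ)) ∧ ‖Y ω‖ ≤ ((m+1 : ℕ) : ℝ)} with hA
  have hAnull : ∀ m, P (A m) = 0 := by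
    intro m
    set M : ℝ := ((m+1 : ℕ) : ℝ) with hM
    have hMpos : (0:ℝ) < M := by positivity
    -- eventually, A m is inside the bad set of g (φ k)
    have hsub : ∀ᶠ k in Filter.atTop,
        A m ⊆ {ω | (inner ℝ (g (φ k)) (Y ω) : ℝ) < -(1 / ((φ k + 1 : ℕ) : ℝ))} := by
      have h1 : ∀ᶠ k in Filter.atTop, ‖g (φ k) - hstar‖ < 1 / (2 * M ^ 2) := by
        have hp : (0:ℝ) < 1 / (2 * M ^ 2) := by positivity
        exact hnorm0.eventually_lt_const hp
      have h2 : ∀ᶠ k in Filter.atTop, 2 * M ≤ ((φ k + 1 : ℕ) : ℝ) := by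
        filter_upwards [Filter.eventually_ge_atTop (2 * (m + 1))] with k hk
        have hφk : 2 * (m + 1) ≤ φ k := hk.trans hφ.le_apply
        have : ((2 * (m+1) : ℕ) : ℝ) ≤ ((φ k + 1 : ℕ) : ℝ) := by
          exact_mod_cast Nat.le_succ_of_le hφk
        calc 2 * M = ((2 * (m+1) : ℕ) : ℝ) := by push_cast [hM]; ring
          _ ≤ _ := this
      filter_upwards [h1, h2] with k hk1 hk2
      intro ω hω
      obtain ⟨hω1, hω2⟩ := hω
      have hip : (inner ℝ (g (φ k) - hstar) (Y ω) : ℝ) ≤ ‖g (φ k) - hstar‖ * ‖Y ω‖ :=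
        real_inner_le_norm _ _
      have hsplit : (inner ℝ (g (φ k)) (Y ω) : ℝ)
          = (inner ℝ hstar (Y ω) : ℝ) + (inner ℝ (g (φ k) - hstar) (Y ω) : ℝ) := by
        rw [inner_sub_left]; ring
      have hYb : ‖g (φ k) - hstar‖ * ‖Y ω‖ ≤ (1 / (2 * M ^ 2)) * M := by
        apply mul_le_mul hk1.le hω2 (norm_nonneg _) (by positivity)
      have hlt : (inner ℝ (g (φ k)) (Y ω) : ℝ) < -(1 / M) + 1 / (2 * M) := by
        rw [hsplit]
        have : (1 / (2 * M ^ 2)) * M = 1 / (2 * M) := by field_simp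
        calc (inner ℝ hstar (Y ω) : ℝ) + (inner ℝ (g (φ k) - hstar) (Y ω) : ℝ)
            < -(1/M) + (1 / (2 * M ^ 2)) * M := by
              apply add_lt_add_of_lt_of_le hω1 (hip.trans hYb)
          _ = -(1/M) + 1/(2*M) := by rw [this]
      have heq : -(1 / M) + 1 / (2 * M) = -(1 / (2 * M)) := by field_simp; ring
      have hfin : -(1 / (2 * M)) ≤ -(1 / ((φ k + 1 : ℕ) : ℝ)) := by
        have hpos : (0:ℝ) < ((φ k + 1 : ℕ) : ℝ) := by positivity
        have := one_div_le_one_div_of_le (by positivity : (0:ℝ) < 2 * M) hk2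
        linarith
      exact lt_of_lt_of_le (heq ▸ hlt) hfin
    have hPA : ∀ᶠ k in Filter.atTop,
        P (A m) ≤ ENNReal.ofReal (1 / ((φ k + 1 : ℕ) : ℝ)) := by
      filter_upwards [hsub] with k hk
      exact (measure_mono hk).trans (hg_bd (φ k) P hP).le
    have hto0 : Filter.Tendsto (fun k => ENNReal.ofReal (1 / ((φ k + 1 : ℕ) : ℝ)))
        Filter.atTop (nhds 0) := by
      rw [show (0:ℝ≥0∞) = ENNReal.ofReal 0 by simp]
      apply ENNReal.tendsto_ofReal
      have : Filter.Tendsto (fun n : ℕ => 1 / ((n + 1 : ℕ) : ℝ)) Filter.atTop (nhds 0) := by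
        push_cast; exact (tendsto_one_div_add_atTop_nhds_zero_nat : Filter.Tendsto (fun n : ℕ => 1 / ((n : ℝ) + 1)) Filter.atTop (nhds 0))
      exact this.comp hφ.tendsto_atTop
    exact le_antisymm (ge_of_tendsto hto0 hPA) (zero_le)
  -- conclude the a.e. statement
  have hcov : {ω | (inner ℝ hstar (Y ω) : ℝ) < 0} ⊆ ⋃ m, A m := by
    intro ω hω
    have hv : (inner ℝ hstar (Y ω) : ℝ) < 0 := hω
    obtain ⟨a, ha⟩ := exists_nat_one_div_lt (show (0:ℝ) < -(inner ℝ hstar (Y ω) : ℝ) by linarith)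
    obtain ⟨b, hb⟩ := exists_nat_ge ‖Y ω‖
    refine mem_iUnion.2 ⟨max a b, ?_, ?_⟩
    · have h1 : (1 : ℝ) / ((max a b + 1 : ℕ) : ℝ) ≤ 1 / ((a + 1 : ℕ) : ℝ) := by
        apply one_div_le_one_div_of_le (by positivity)
        exact_mod_cast Nat.succ_le_succ (le_max_left a b)
      have := ha
      push_cast at this h1 ⊢
      linarith
    · have : (b : ℝ) ≤ ((max a b + 1 : ℕ) : ℝ) := by
        exact_mod_cast Nat.le_succ_of_le (le_max_right a b)
      exact hb.trans this
  have : P {ω | (inner ℝ hstar (Y ω) : ℝ) < 0} = 0 :=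
    le_antisymm ((measure_mono hcov).trans (measure_iUnion_null hAnull).le) (zero_le)
  rw [ae_iff]
  simpa only [not_le] using this
end
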